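/- Let x ∈ (0,1) be irrational with θ_n = q_n x − p_n, θ_{−1}=1, θ_0=x. Then x = ∑_{k=1}^∞ a_{2k} |θ_{2k−1}| and 1 = ∑_{k=0}^∞ a_{2k+1} |θ_{2k}|. -/

import Mathlib

open scoped BigOperators

/-- The Gauss map `x ↦ {1/x}` (with `T 0 = 0`). -/
noncomputable def gauss (x : ℝ) : ℝ := Int.fract (1 / x)

/-- `cf x n = (p_{n-1}, q_{n-1})`, the continued fraction convergents of `x`,
with `p_{-1} = 1, q_{-1} = 0, p_0 = 0, q_0 = 1`,
`p_{k+1} = a_{k+1} p_k + p_{k-1}`, `q_{k+1} = a_{k+1} q_k + q_{k-1}`,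
where `a_{k+1} = ⌊1 / T^k x⌋`. -/
noncomputable def cf (x : ℝ) : ℕ → ℤ × ℤ
  | 0 => (1, 0)
  | 1 => (0, 1)
  | n + 2 => (⌊1 / gauss^[n] x⌋ * (cf x (n + 1)).1 + (cf x n).1,
              ⌊1 / gauss^[n] x⌋ * (cf x (n + 1)).2 + (cf x n).2)

/-- `pcf x n = p_{n-1}`. -/
noncomputable def pcf (x : ℝ) (n : ℕ) : ℤ := (cf x n).1

/-- `qcf x n = q_{n-1}`. -/
noncomputable def qcf (x : ℝ) (n : ℕ) : ℤ := (cf x n).2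

/-- `acf x i = a_i = ⌊1 / T^{i-1} x⌋`, the `i`-th partial quotient (for `i ≥ 1`). -/
noncomputable def acf (x : ℝ) (i : ℕ) : ℤ := ⌊1 / gauss^[i - 1] x⌋

/-- `absθ x n = |θ_{n-1}| = |q_{n-1} x - p_{n-1}|` (so `absθ x 0 = 1`, `absθ x 1 = |x|`). -/
noncomputable def absθ (x : ℝ) (n : ℕ) : ℝ := |(qcf x n : ℝ) * x - (pcf x n : ℝ)|

lemma gauss_step {y : ℝ} (h : Irrational y) (h0 : 0 < y) (h1 : y < 1) :
    Irrational (gauss y) ∧ 0 < gauss y ∧ gauss y < 1 := by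
  have hinv : Irrational (1 / y) := by simpa [one_div] using h.inv
  have hg : Irrational (gauss y) := by
    unfold gauss; rw [Int.fract]; exact hinv.sub_intCast _
  refine ⟨hg, ?_, Int.fract_lt_one _⟩
  rcases lt_or_eq_of_le (Int.fract_nonneg (1 / y)) with h | h
  · exact h
  · exact absurd h.symm (by simpa [gauss, one_div] using hg.ne_int 0)

variable {x : ℝ}

lemma iter_mem (hirr : Irrational x) (hx0 : 0 < x) (hx1 : x < 1) (n : ℕ) :
    Irrational (gauss^[n] x) ∧ 0 < gauss^[n] x ∧ gauss^[n] x < 1 := by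
  induction n with
  | zero => exact ⟨hirr, hx0, hx1⟩
  | succ n ih =>
    rw [Function.iterate_succ_apply']
    exact gauss_step ih.1 ih.2.1 ih.2.2

noncomputable def θr (x : ℝ) (n : ℕ) : ℝ := (qcf x n : ℝ) * x - (pcf x n : ℝ)

lemma θr_succ (hirr : Irrational x) (hx0 : 0 < x) (hx1 : x < 1) (n : ℕ) :
    θr x (n + 1) = -(gauss^[n] x) * θr x n := by
  induction n with
  | zero =>
    simp [θr, qcf, pcf, cf]
  | succ n ih =>
    obtain ⟨hi, h0, h1⟩ := iter_mem hirr hx0 hx1 n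
    have hne : gauss^[n] x ≠ 0 := ne_of_gt h0
    have hcf : cf x (n + 2) = (⌊1 / gauss^[n] x⌋ * (cf x (n + 1)).1 + (cf x n).1,
        ⌊1 / gauss^[n] x⌋ * (cf x (n + 1)).2 + (cf x n).2) := by rw [cf]
    have hrec : θr x (n + 2) = (⌊1 / gauss^[n] x⌋ : ℝ) * θr x (n + 1) + θr x n := by
      simp only [θr, qcf, pcf, hcf]
      push_cast
      ring
    have hfr : gauss^[n + 1] x = 1 / gauss^[n] x - (⌊1 / gauss^[n] x⌋ : ℝ) := by
      rw [Function.iterate_succ_apply']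
      rfl
    rw [hrec, ih, hfr]
    field_simp
    ring

lemma absθ_eq (n : ℕ) : absθ x n = |θr x n| := rfl

lemma absθ_zero : absθ x 0 = 1 := by
  simp [absθ, qcf, pcf, cf]

lemma absθ_succ (hirr : Irrational x) (hx0 : 0 < x) (hx1 : x < 1) (n : ℕ) :
    absθ x (n + 1) = gauss^[n] x * absθ x n := by
  rw [absθ_eq, absθ_eq, θr_succ hirr hx0 hx1, abs_mul, abs_neg,
    abs_of_pos (iter_mem hirr hx0 hx1 n).2.1]

lemma absθ_pos (hirr : Irrational x) (hx0 : 0 < x) (hx1 : x < 1) (n : ℕ) :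
    0 < absθ x n := by
  induction n with
  | zero => rw [absθ_zero]; norm_num
  | succ n ih =>
    rw [absθ_succ hirr hx0 hx1]
    exact mul_pos (iter_mem hirr hx0 hx1 n).2.1 ih

lemma absθ_one (hirr : Irrational x) (hx0 : 0 < x) (hx1 : x < 1) :
    absθ x 1 = x := by
  rw [absθ_succ hirr hx0 hx1, absθ_zero]
  simp

lemma acf_ge_one (hirr : Irrational x) (hx0 : 0 < x) (hx1 : x < 1) (n : ℕ) :
    1 ≤ acf x (n + 1) := by
  obtain ⟨_, h0, h1⟩ := iter_mem hirr hx0 hx1 n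
  have h : (1 : ℝ) ≤ 1 / gauss^[n] x := by
    rw [le_div_iff₀ h0]; linarith
  have : ((1 : ℤ) : ℝ) ≤ 1 / gauss^[n] x := by exact_mod_cast h
  simpa [acf] using Int.le_floor.mpr this

lemma key (hirr : Irrational x) (hx0 : 0 < x) (hx1 : x < 1) (n : ℕ) :
    (acf x (n + 1) : ℝ) * absθ x (n + 1) = absθ x n - absθ x (n + 2) := by
  obtain ⟨_, h0, _⟩ := iter_mem hirr hx0 hx1 n
  have hne : gauss^[n] x ≠ 0 := ne_of_gt h0
  have hfr : gauss^[n + 1] x = 1 / gauss^[n] x - (⌊1 / gauss^[n] x⌋ : ℝ) := by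
    rw [Function.iterate_succ_apply']; rfl
  have hacf : (acf x (n + 1) : ℤ) = ⌊1 / gauss^[n] x⌋ := by simp [acf]
  rw [hacf, absθ_succ hirr hx0 hx1 (n + 1), absθ_succ hirr hx0 hx1 n, hfr]
  field_simp
  ring

lemma absθ_half (hirr : Irrational x) (hx0 : 0 < x) (hx1 : x < 1) (n : ℕ) :
    absθ x (n + 2) ≤ absθ x n / 2 := by
  have hk := key hirr hx0 hx1 n
  have h1 : absθ x (n + 2) < absθ x (n + 1) := by
    rw [absθ_succ hirr hx0 hx1 (n + 1)]
    have := (iter_mem hirr hx0 hx1 (n + 1)).2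
    nlinarith [absθ_pos hirr hx0 hx1 (n + 1)]
  have h2 : (1 : ℝ) ≤ (acf x (n + 1) : ℝ) := by exact_mod_cast acf_ge_one hirr hx0 hx1 n
  nlinarith [absθ_pos hirr hx0 hx1 (n + 1)]

lemma absθ_le_geo (hirr : Irrational x) (hx0 : 0 < x) (hx1 : x < 1) (m k : ℕ) :
    absθ x (m + 2 * k) ≤ absθ x m / 2 ^ k := by
  induction k with
  | zero => simp
  | succ k ih =>
    have h := absθ_half hirr hx0 hx1 (m + 2 * k)
    have : m + 2 * (k + 1) = (m + 2 * k) + 2 := by ring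
    rw [this, pow_succ]
    calc absθ x ((m + 2 * k) + 2) ≤ absθ x (m + 2 * k) / 2 := h
      _ ≤ absθ x m / 2 ^ k / 2 := by linarith
      _ = absθ x m / (2 ^ k * 2) := by ring

lemma absθ_tendsto (hirr : Irrational x) (hx0 : 0 < x) (hx1 : x < 1) (m : ℕ) :
    Filter.Tendsto (fun k => absθ x (m + 2 * k)) Filter.atTop (nhds 0) := by
  have hgeo : Filter.Tendsto (fun k : ℕ => absθ x m / 2 ^ k) Filter.atTop (nhds 0) := by
    simpa using (tendsto_pow_atTop_nhds_zero_of_lt_one (by norm_num : (0:ℝ) ≤ 1/2)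
      (by norm_num : (1:ℝ)/2 < 1)).const_mul (absθ x m) |>.congr (by
        intro k; rw [div_pow, one_pow]; ring)
  refine squeeze_zero (fun k => (absθ_pos hirr hx0 hx1 _).le)
    (fun k => absθ_le_geo hirr hx0 hx1 m k) hgeo

lemma telescope_hasSum (hirr : Irrational x) (hx0 : 0 < x) (hx1 : x < 1) (m : ℕ) :
    HasSum (fun k : ℕ => (acf x (m + 2 * k + 1) : ℝ) * absθ x (m + 2 * k + 1))
      (absθ x m) := by
  have hterm : ∀ k : ℕ, (acf x (m + 2 * k + 1) : ℝ) * absθ x (m + 2 * k + 1)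
      = absθ x (m + 2 * k) - absθ x (m + 2 * (k + 1)) := by
    intro k
    have := key hirr hx0 hx1 (m + 2 * k)
    rw [this, Nat.mul_succ, ← Nat.add_assoc]
  have hnn : ∀ k : ℕ, 0 ≤ (acf x (m + 2 * k + 1) : ℝ) * absθ x (m + 2 * k + 1) := by
    intro k
    have h1 : (1 : ℝ) ≤ (acf x (m + 2 * k + 1) : ℝ) := by
      exact_mod_cast acf_ge_one hirr hx0 hx1 (m + 2 * k)
    have h2 := absθ_pos hirr hx0 hx1 (m + 2 * k + 1)
    positivity
  rw [hasSum_iff_tendsto_nat_of_nonneg hnn]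
  have hsum : ∀ n : ℕ, ∑ k ∈ Finset.range n,
      ((acf x (m + 2 * k + 1) : ℝ) * absθ x (m + 2 * k + 1))
      = absθ x m - absθ x (m + 2 * n) := by
    intro n
    calc ∑ k ∈ Finset.range n, ((acf x (m + 2 * k + 1) : ℝ) * absθ x (m + 2 * k + 1))
        = ∑ k ∈ Finset.range n, (absθ x (m + 2 * k) - absθ x (m + 2 * (k + 1))) :=
          Finset.sum_congr rfl (fun k _ => hterm k)
      _ = absθ x (m + 2 * 0) - absθ x (m + 2 * n) :=
          Finset.sum_range_sub' (fun k => absθ x (m + 2 * k)) n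
      _ = absθ x m - absθ x (m + 2 * n) := by norm_num
  simp only [hsum]
  have := (absθ_tendsto hirr hx0 hx1 m).const_sub (absθ x m)
  simpa using this

/-- for irrational `x ∈ (0,1)`,
`x = ∑_{k=1}^∞ a_{2k} |θ_{2k-1}|` and `1 = ∑_{k=0}^∞ a_{2k+1} |θ_{2k}|`. -/
theorem theta_parity_sums (x : ℝ) (hirr : Irrational x)
    (hx0 : 0 < x) (hx1 : x < 1) :
    HasSum (fun k : ℕ => (acf x (2 * (k + 1)) : ℝ) * absθ x (2 * (k + 1))) x ∧
    HasSum (fun k : ℕ => (acf x (2 * k + 1) : ℝ) * absθ x (2 * k + 1)) 1 := by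
  constructor
  · have h1 := telescope_hasSum hirr hx0 hx1 1
    rw [absθ_one hirr hx0 hx1] at h1
    have he : (fun k : ℕ => (acf x (2 * (k + 1)) : ℝ) * absθ x (2 * (k + 1)))
        = fun k : ℕ => (acf x (1 + 2 * k + 1) : ℝ) * absθ x (1 + 2 * k + 1) := by
      funext k
      have : 2 * (k + 1) = 1 + 2 * k + 1 := by ring
      rw [this]
    rw [he]
    exact h1
  · have h2 := telescope_hasSum hirr hx0 hx1 0
    rw [absθ_zero] at h2
    have he : (fun k : ℕ => (acf x (2 * k + 1) : ℝ) * absθ x (2 * k + 1))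
        = fun k : ℕ => (acf x (0 + 2 * k + 1) : ℝ) * absθ x (0 + 2 * k + 1) := by
      funext k
      have : 2 * k + 1 = 0 + 2 * k + 1 := by ring
      rw [← this] 
    rw [he]
    exact h2
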